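/- Let $V_i = V_i^1 \oplus V_i^2$ for $i=1,\dots,d$ with $d \geq 2$ be finite-dimensional vector spaces over a field. If $T_1 \in V_1^1 \otimes \cdots \otimes V_d^1$ and $T_2 \in V_1^2 \otimes \cdots \otimes V_d^2$, then the slice rank of $T_1 \oplus T_2$ (i.e., of $T_1 + T_2$ viewed inside $V_1 \otimes \cdots \otimes V_d$) equals the slice rank of $T_1$ plus the slice rank of $T_2$. -/

import Mathlib

open scoped TensorProduct BigOperators

/-- Slice rank of a tensor in a tensor product of vector spaces. -/
noncomputable def tensorSliceRank (F : Type*) [Field F] {d : ℕ} (V : Fin d → Type*)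
    [∀ i, AddCommGroup (V i)] [∀ i, Module F (V i)] (T : ⨂[F] i, V i) : ℕ :=
  sInf {r | ∃ S : Fin r → ⨂[F] i, V i,
    (∀ j, ∃ i : Fin d, ∃ u : V i,
      S j ∈ Submodule.span F {t | ∃ v : ∀ k, V k, v i = u ∧ t = PiTensorProduct.tprod F v}) ∧
    T = ∑ j, S j}

namespace SliceRankAux

variable {F : Type*} [Field F] {d : ℕ} {V : Fin d → Type*}
  [∀ i, AddCommGroup (V i)] [∀ i, Module F (V i)]

/-- Tensors that are `u` in slot `i` tensored with anything else. -/
def fixSlice (F : Type*) [Field F] {d : ℕ} {V : Fin d → Type*}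
    [∀ i, AddCommGroup (V i)] [∀ i, Module F (V i)] (i : Fin d) (u : V i) :
    Submodule F (⨂[F] k, V k) :=
  Submodule.span F {t | ∃ v : ∀ k, V k, v i = u ∧ t = PiTensorProduct.tprod F v}

/-- The defining set of `tensorSliceRank`. -/
def sliceSet (F : Type*) [Field F] {d : ℕ} (V : Fin d → Type*)
    [∀ i, AddCommGroup (V i)] [∀ i, Module F (V i)] (T : ⨂[F] i, V i) : Set ℕ :=
  {r | ∃ S : Fin r → ⨂[F] i, V i, (∀ j, ∃ i u, S j ∈ fixSlice F i u) ∧ T = ∑ j, S j}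

lemma tensorSliceRank_eq_sInf (T : ⨂[F] i, V i) :
    tensorSliceRank F V T = sInf (sliceSet F V T) := rfl

lemma mem_fixSlice_map {U : Fin d → Type*} [∀ i, AddCommGroup (U i)] [∀ i, Module F (U i)]
    (f : ∀ i, U i →ₗ[F] V i) {i : Fin d} {u : U i} {z : ⨂[F] k, U k}
    (hz : z ∈ fixSlice F i u) :
    PiTensorProduct.map f z ∈ fixSlice F i (f i u) := by
  have hle : fixSlice F i u ≤ (fixSlice F i (f i u)).comap (PiTensorProduct.map f) := by
    rw [fixSlice, Submodule.span_le]
    rintro t ⟨v, hv, rfl⟩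
    simp only [SetLike.mem_coe, Submodule.mem_comap, PiTensorProduct.map_tprod]
    exact Submodule.subset_span ⟨fun k => f k (v k), by simp [hv], rfl⟩
  exact hle hz

lemma card_mem_sliceSet {κ : Type*} [Fintype κ] (T : ⨂[F] i, V i) (S : κ → ⨂[F] i, V i)
    (hS : ∀ j, ∃ i u, S j ∈ fixSlice F i u) (hT : T = ∑ j, S j) :
    Fintype.card κ ∈ sliceSet F V T := by
  refine ⟨S ∘ (Fintype.equivFin κ).symm, fun j => hS _, ?_⟩
  rw [hT]
  exact (Equiv.sum_comp (Fintype.equivFin κ).symm S).symm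

lemma add_mem_sliceSet {U₁ U₂ : Fin d → Type*}
    [∀ i, AddCommGroup (U₁ i)] [∀ i, Module F (U₁ i)]
    [∀ i, AddCommGroup (U₂ i)] [∀ i, Module F (U₂ i)]
    (f₁ : ∀ i, U₁ i →ₗ[F] V i) (f₂ : ∀ i, U₂ i →ₗ[F] V i) {r₁ r₂ : ℕ}
    {T₁ : ⨂[F] i, U₁ i} {T₂ : ⨂[F] i, U₂ i}
    (h₁ : r₁ ∈ sliceSet F U₁ T₁) (h₂ : r₂ ∈ sliceSet F U₂ T₂) :
    r₁ + r₂ ∈ sliceSet F V (PiTensorProduct.map f₁ T₁ + PiTensorProduct.map f₂ T₂) := by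
  obtain ⟨S₁, hS₁, hT₁⟩ := h₁
  obtain ⟨S₂, hS₂, hT₂⟩ := h₂
  have hmem := card_mem_sliceSet (F := F) (V := V)
    (PiTensorProduct.map f₁ T₁ + PiTensorProduct.map f₂ T₂)
    (Sum.elim (fun j => PiTensorProduct.map f₁ (S₁ j)) (fun j => PiTensorProduct.map f₂ (S₂ j)))
    ?_ ?_
  · simpa using hmem
  · rintro (j | j)
    · obtain ⟨i, u, hu⟩ := hS₁ j
      exact ⟨i, f₁ i u, mem_fixSlice_map f₁ hu⟩
    · obtain ⟨i, u, hu⟩ := hS₂ j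
      exact ⟨i, f₂ i u, mem_fixSlice_map f₂ hu⟩
  · rw [Fintype.sum_sum_type]
    simp only [Sum.elim_inl, Sum.elim_inr]
    rw [← map_sum, ← map_sum, ← hT₁, ← hT₂]

lemma map_eq_zero_of_slot {N : Fin d → Type*} [∀ i, AddCommGroup (N i)] [∀ i, Module F (N i)]
    (f : ∀ i, V i →ₗ[F] N i) (i₀ : Fin d) (h : f i₀ = 0) (z : ⨂[F] i, V i) :
    PiTensorProduct.map f z = 0 := by
  induction z using PiTensorProduct.induction_on with
  | smul_tprod r v =>
    rw [map_smul, PiTensorProduct.map_tprod]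
    rw [MultilinearMap.map_coord_zero _ i₀ (by simp [h]), smul_zero]
  | add x y hx hy => rw [map_add, hx, hy, add_zero]

/-- Span of all pure tensors having their `i`-th component in `A i`, for some `i`. -/
def bigSpan (F : Type*) [Field F] {d : ℕ} {V : Fin d → Type*}
    [∀ i, AddCommGroup (V i)] [∀ i, Module F (V i)] (A : ∀ i, Submodule F (V i)) :
    Submodule F (⨂[F] k, V k) :=
  Submodule.span F {t | ∃ (i : Fin d) (v : ∀ k, V k), v i ∈ A i ∧ t = PiTensorProduct.tprod F v}

lemma mem_bigSpan_of_map_mkQ_eq_zero (A : ∀ i, Submodule F (V i)) (T : ⨂[F] i, V i)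
    (h : PiTensorProduct.map (fun i => (A i).mkQ) T = 0) : T ∈ bigSpan F A := by
  classical
  have hsec : ∀ i, ∃ s : (V i ⧸ A i) →ₗ[F] V i, (A i).mkQ ∘ₗ s = LinearMap.id :=
    fun i => (A i).mkQ.exists_rightInverse_of_surjective (A i).range_mkQ
  choose s hs using hsec
  have key : ∀ z : ⨂[F] i, V i,
      z - PiTensorProduct.map (fun i => (s i) ∘ₗ (A i).mkQ) z ∈ bigSpan F A := by
    intro z
    induction z using PiTensorProduct.induction_on with
    | smul_tprod r v =>
      rw [map_smul, PiTensorProduct.map_tprod, ← smul_sub]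
      refine Submodule.smul_mem _ _ ?_
      set w : ∀ i, V i := fun i => s i ((A i).mkQ (v i)) with hw
      have hwA : ∀ i, v i - w i ∈ A i := by
        intro i
        have h1 : (A i).mkQ (s i ((A i).mkQ (v i))) = (A i).mkQ (v i) := by
          have := congrArg (fun g => g ((A i).mkQ (v i))) (hs i)
          simpa using this
        have : Submodule.Quotient.mk (p := A i) (w i) = Submodule.Quotient.mk (v i) := by
          simpa [Submodule.mkQ_apply, hw] using h1
        simpa using (Submodule.Quotient.eq (A i)).1 this.symm
      have hv : PiTensorProduct.tprod F v
          = PiTensorProduct.tprod F (w + fun i => v i - w i) := by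
        congr 1
        funext i
        simp
      rw [hv, MultilinearMap.map_add_univ]
      have hcast : (⨂ₜ[F] (i : Fin d), (s i ∘ₗ (A i).mkQ) (v i))
          = PiTensorProduct.tprod F w := rfl
      rw [hcast]
      rw [Fintype.sum_eq_add_sum_compl Finset.univ
        (fun t : Finset (Fin d) => PiTensorProduct.tprod F (t.piecewise w fun i => v i - w i))]
      rw [Finset.piecewise_univ, add_sub_cancel_left]
      refine Submodule.sum_mem _ ?_
      intro t ht
      have hne : t ≠ Finset.univ := by simpa using ht
      obtain ⟨i, hi⟩ : ∃ i, i ∉ t := by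
        by_contra hc
        push_neg at hc
        exact hne (Finset.eq_univ_iff_forall.2 hc)
      refine Submodule.subset_span ⟨i, _, ?_, rfl⟩
      rw [Finset.piecewise_eq_of_notMem _ _ _ hi]
      exact hwA i
    | add x y hx hy =>
      have : (x + y) - PiTensorProduct.map (fun i => (s i) ∘ₗ (A i).mkQ) (x + y)
          = (x - PiTensorProduct.map (fun i => (s i) ∘ₗ (A i).mkQ) x)
            + (y - PiTensorProduct.map (fun i => (s i) ∘ₗ (A i).mkQ) y) := by
        rw [map_add]; abel
      rw [this]; exact Submodule.add_mem _ hx hy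
  have h2 : PiTensorProduct.map (fun i => (s i) ∘ₗ (A i).mkQ) T = 0 := by
    rw [PiTensorProduct.map_comp, LinearMap.comp_apply, h, map_zero]
  have := key T
  rwa [h2, sub_zero] at this

lemma sum_finrank_mem_sliceSet [∀ i, FiniteDimensional F (V i)]
    (A : ∀ i, Submodule F (V i)) (T : ⨂[F] i, V i) (hT : T ∈ bigSpan F A) :
    (∑ i, Module.finrank F (A i)) ∈ sliceSet F V T := by
  classical
  set κ := (i : Fin d) × Fin (Module.finrank F (A i)) with hκ
  set bas : ∀ i, Module.Basis (Fin (Module.finrank F (A i))) F (A i) :=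
    fun i => Module.finBasis F (A i) with hbas
  set M : Submodule F (⨂[F] k, V k) :=
    ⨆ p : κ, fixSlice F p.1 ((bas p.1 p.2 : V p.1)) with hM
  have hle : bigSpan F A ≤ M := by
    rw [bigSpan, Submodule.span_le]
    rintro t ⟨i, v, hv, rfl⟩
    have hrepr : v i = ∑ m, ((bas i).repr ⟨v i, hv⟩) m • ((bas i m : V i)) := by
      have h1 := (bas i).sum_repr ⟨v i, hv⟩
      have h2 := congrArg (Submodule.subtype (A i)) h1
      rw [map_sum] at h2
      simp only [map_smul, Submodule.subtype_apply] at h2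
      exact h2.symm
    have hup : PiTensorProduct.tprod F v
        = ∑ m, ((bas i).repr ⟨v i, hv⟩) m •
            PiTensorProduct.tprod F (Function.update v i (bas i m : V i)) := by
      conv_lhs => rw [← Function.update_eq_self i v, hrepr]
      rw [MultilinearMap.map_update_sum]
      exact Finset.sum_congr rfl fun m _ => by rw [MultilinearMap.map_update_smul]
    rw [SetLike.mem_coe, hup]
    refine Submodule.sum_mem _ fun m _ => Submodule.smul_mem _ _ ?_
    refine Submodule.mem_iSup_of_mem (⟨i, m⟩ : κ) ?_
    exact Submodule.subset_span
      ⟨Function.update v i (bas i m : V i), Function.update_self _ _ _, rfl⟩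
  have hTM : T ∈ M := hle hT
  rw [hM, Submodule.mem_iSup_iff_exists_finsupp] at hTM
  obtain ⟨f, hf, hsum⟩ := hTM
  have hT' : T = ∑ p : κ, f p := by
    rw [← hsum, Finsupp.sum_fintype _ _ (fun _ => rfl)]
  have hcard := card_mem_sliceSet (F := F) (V := V) T (fun p => f p)
    (fun p => ⟨p.1, (bas p.1 p.2 : V p.1), hf p⟩) hT'
  have : Fintype.card κ = ∑ i, Module.finrank F (A i) := by
    simp [hκ, Fintype.card_sigma]
  rwa [this] at hcard

lemma sliceSet_nonempty [∀ i, FiniteDimensional F (V i)] (hd : 0 < d) (T : ⨂[F] i, V i) :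
    (sliceSet F V T).Nonempty := by
  refine ⟨_, sum_finrank_mem_sliceSet (fun _ => ⊤) T ?_⟩
  have h1 : T ∈ Submodule.span F (Set.range (PiTensorProduct.tprod F (s := V))) := by
    rw [PiTensorProduct.span_tprod_eq_top]; trivial
  refine Submodule.span_mono ?_ h1
  rintro t ⟨v, rfl⟩
  exact ⟨⟨0, hd⟩, v, trivial, rfl⟩

lemma exists_subspaces {r : ℕ} (T : ⨂[F] i, V i) (hr : r ∈ sliceSet F V T) :
    ∃ A : ∀ i, Submodule F (V i), (∑ i, Module.finrank F (A i)) ≤ r ∧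
      PiTensorProduct.map (fun i => (A i).mkQ) T = 0 := by
  classical
  obtain ⟨S, hS, hT⟩ := hr
  choose ij uj hj using hS
  set A : ∀ i, Submodule F (V i) := fun i =>
    Submodule.span F (Set.range (fun p : {j // ij j = i} => (p.prop ▸ uj p.val : V i))) with hA
  refine ⟨A, ?_, ?_⟩
  · have hbound : ∀ i, Module.finrank F (A i)
        ≤ (Finset.univ.filter fun j => ij j = i).card := by
      intro i
      have h1 := finrank_span_le_card (R := F)
        (Set.range (fun p : {j // ij j = i} => (p.prop ▸ uj p.val : V i)))
      refine h1.trans ?_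
      rw [Set.toFinset_range]
      refine (Finset.card_image_le).trans ?_
      rw [Finset.card_univ, Fintype.card_subtype]
    calc ∑ i, Module.finrank F (A i)
        ≤ ∑ i, (Finset.univ.filter fun j => ij j = i).card :=
          Finset.sum_le_sum fun i _ => hbound i
      _ = r := by
          rw [← Finset.card_eq_sum_card_fiberwise (fun j _ => Finset.mem_univ (ij j))]
          simp
  · rw [hT, map_sum]
    refine Finset.sum_eq_zero fun j _ => ?_
    have hle : fixSlice F (ij j) (uj j)
        ≤ LinearMap.ker (PiTensorProduct.map (fun i => (A i).mkQ)) := by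
      rw [fixSlice, Submodule.span_le]
      rintro t ⟨v, hv, rfl⟩
      simp only [SetLike.mem_coe, LinearMap.mem_ker, PiTensorProduct.map_tprod]
      refine MultilinearMap.map_coord_zero _ (ij j) ?_
      show (A (ij j)).mkQ (v (ij j)) = 0
      rw [hv, Submodule.mkQ_apply, Submodule.Quotient.mk_eq_zero]
      exact Submodule.subset_span ⟨⟨j, rfl⟩, rfl⟩
    exact hle (hj j)

lemma exists_factor {M N P : Type*} [AddCommGroup M] [AddCommGroup N] [AddCommGroup P]
    [Module F M] [Module F N] [Module F P] (f : M →ₗ[F] N) (g : M →ₗ[F] P)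
    (hk : LinearMap.ker f ≤ LinearMap.ker g) : ∃ h : N →ₗ[F] P, h ∘ₗ f = g := by
  obtain ⟨c, hc⟩ := Submodule.exists_isCompl (LinearMap.range f)
  refine ⟨((LinearMap.ker f).liftQ g hk) ∘ₗ (f.quotKerEquivRange.symm.toLinearMap) ∘ₗ
    ((LinearMap.range f).linearProjOfIsCompl c hc), ?_⟩
  ext x
  simp only [LinearMap.coe_comp, Function.comp_apply, LinearEquiv.coe_coe]
  have h1 : (LinearMap.range f).linearProjOfIsCompl c hc (f x)
      = ⟨f x, LinearMap.mem_range_self f x⟩ :=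
    Submodule.linearProjOfIsCompl_apply_left hc ⟨f x, LinearMap.mem_range_self f x⟩
  rw [h1, LinearMap.quotKerEquivRange_symm_apply_image]
  exact Submodule.liftQ_apply _ g x

lemma finrank_proj_pair {E : Type*} [AddCommGroup E] [Module F E] [FiniteDimensional F E]
    (P Q : Submodule F E) (h : IsCompl P Q) (A : Submodule F E) :
    Module.finrank F (A.map (P.linearProjOfIsCompl Q h))
      + Module.finrank F (A.comap Q.subtype) = Module.finrank F A := by
  set f : A →ₗ[F] P := (P.linearProjOfIsCompl Q h) ∘ₗ A.subtype with hf
  have hrange : LinearMap.range f = A.map (P.linearProjOfIsCompl Q h) := by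
    rw [hf, LinearMap.range_comp, Submodule.range_subtype]
  have hker : LinearMap.ker f = (Q ⊓ A).comap A.subtype := by
    rw [hf, LinearMap.ker_comp, Submodule.linearProjOfIsCompl, Submodule.linearProjOfIsCompl_ker]
    ext x
    simp [x.2]
  have e1 : Module.finrank F (LinearMap.ker f) = Module.finrank F (A.comap Q.subtype) := by
    have h2 : A.comap Q.subtype = (A ⊓ Q).comap Q.subtype := by
      ext x; simp [x.2]
    rw [hker, h2]
    rw [LinearEquiv.finrank_eq (Submodule.comapSubtypeEquivOfLe (inf_le_right : Q ⊓ A ≤ A)),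
      LinearEquiv.finrank_eq (Submodule.comapSubtypeEquivOfLe (inf_le_right : A ⊓ Q ≤ Q))]
    rw [inf_comm]
  rw [← hrange, ← e1, LinearMap.finrank_range_add_finrank_ker]

variable [∀ i, FiniteDimensional F (V i)]

lemma exchange_key (W₁ W₂ : ∀ i, Submodule F (V i)) (hcompl : ∀ i, IsCompl (W₁ i) (W₂ i))
    (A : ∀ i, Submodule F (V i)) (slot0 : Fin d) (i : Fin d) :
    ∃ (B : Submodule F (W₁ i)) (C : Submodule F (W₂ i))
      (G : V i →ₗ[F] (W₁ i ⧸ B)) (G' : V i →ₗ[F] (W₂ i ⧸ C)),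
      G ∘ₗ (W₁ i).subtype = B.mkQ ∧ (∀ a ∈ A i, G a = 0) ∧
      (∀ a ∈ A i, G' a = 0) ∧ G' ∘ₗ (W₂ i).subtype = C.mkQ ∧
      Module.finrank F B + Module.finrank F C = Module.finrank F (A i) ∧
      (i = slot0 → G ∘ₗ (W₂ i).subtype = 0) ∧
      (i ≠ slot0 → G' ∘ₗ (W₁ i).subtype = 0) := by
  classical
  by_cases hi : i = slot0
  · set p1 : V i →ₗ[F] W₁ i := (W₁ i).linearProjOfIsCompl (W₂ i) (hcompl i) with hp1
    set B : Submodule F (W₁ i) := (A i).map p1 with hB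
    set C : Submodule F (W₂ i) := (A i).comap (W₂ i).subtype with hC
    have hk : LinearMap.ker ((A i).mkQ ∘ₗ (W₂ i).subtype) ≤ LinearMap.ker C.mkQ := by
      rw [LinearMap.ker_comp, Submodule.ker_mkQ, Submodule.ker_mkQ]
    obtain ⟨h', hh'⟩ := exists_factor ((A i).mkQ ∘ₗ (W₂ i).subtype) C.mkQ hk
    refine ⟨B, C, B.mkQ ∘ₗ p1, h' ∘ₗ (A i).mkQ, ?_, ?_, ?_, ?_, ?_, ?_, ?_⟩
    · ext x
      simp only [LinearMap.coe_comp, Function.comp_apply]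
      exact congrArg B.mkQ (Submodule.linearProjOfIsCompl_apply_left (hcompl i) x)
    · intro a ha
      simp only [LinearMap.coe_comp, Function.comp_apply]
      rw [Submodule.mkQ_apply, Submodule.Quotient.mk_eq_zero]
      exact Submodule.mem_map_of_mem ha
    · intro a ha
      simp only [LinearMap.coe_comp, Function.comp_apply]
      rw [Submodule.mkQ_apply]
      rw [show (Submodule.Quotient.mk a : V i ⧸ A i) = 0 from
        (Submodule.Quotient.mk_eq_zero _).2 ha]
      exact map_zero h'
    · rw [← hh', LinearMap.comp_assoc]
    · exact finrank_proj_pair (W₁ i) (W₂ i) (hcompl i) (A i)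
    · intro _
      ext x
      simp only [LinearMap.coe_comp, Function.comp_apply, LinearMap.zero_apply]
      have h0 : p1 ((W₂ i).subtype x) = 0 :=
        Submodule.linearProjOfIsCompl_apply_right (hcompl i) x
      rw [h0, map_zero]
    · intro h; exact absurd hi h
  · set p2 : V i →ₗ[F] W₂ i := (W₂ i).linearProjOfIsCompl (W₁ i) (hcompl i).symm with hp2
    set B : Submodule F (W₁ i) := (A i).comap (W₁ i).subtype with hB
    set C : Submodule F (W₂ i) := (A i).map p2 with hC
    have hk : LinearMap.ker ((A i).mkQ ∘ₗ (W₁ i).subtype) ≤ LinearMap.ker B.mkQ := by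
      rw [LinearMap.ker_comp, Submodule.ker_mkQ, Submodule.ker_mkQ]
    obtain ⟨h', hh'⟩ := exists_factor ((A i).mkQ ∘ₗ (W₁ i).subtype) B.mkQ hk
    refine ⟨B, C, h' ∘ₗ (A i).mkQ, C.mkQ ∘ₗ p2, ?_, ?_, ?_, ?_, ?_, ?_, ?_⟩
    · rw [← hh', LinearMap.comp_assoc]
    · intro a ha
      simp only [LinearMap.coe_comp, Function.comp_apply]
      rw [Submodule.mkQ_apply]
      rw [show (Submodule.Quotient.mk a : V i ⧸ A i) = 0 from
        (Submodule.Quotient.mk_eq_zero _).2 ha]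
      exact map_zero h'
    · intro a ha
      simp only [LinearMap.coe_comp, Function.comp_apply]
      rw [Submodule.mkQ_apply, Submodule.Quotient.mk_eq_zero]
      exact Submodule.mem_map_of_mem ha
    · ext x
      simp only [LinearMap.coe_comp, Function.comp_apply]
      exact congrArg C.mkQ (Submodule.linearProjOfIsCompl_apply_left ((hcompl i).symm) x)
    · rw [add_comm]
      exact finrank_proj_pair (W₂ i) (W₁ i) (hcompl i).symm (A i)
    · intro h; exact absurd h hi
    · intro _
      ext x
      simp only [LinearMap.coe_comp, Function.comp_apply, LinearMap.zero_apply]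
      have h0 : p2 ((W₁ i).subtype x) = 0 :=
        Submodule.linearProjOfIsCompl_apply_right ((hcompl i).symm) x
      rw [h0, map_zero]

end SliceRankAux

set_option maxHeartbeats 1000000

open SliceRankAux in
theorem sliceRank_directSum (F : Type*) [Field F] {d : ℕ} (hd : 2 ≤ d)
    (V : Fin d → Type*)
    [∀ i, AddCommGroup (V i)] [∀ i, Module F (V i)] [∀ i, FiniteDimensional F (V i)]
    (W₁ W₂ : ∀ i, Submodule F (V i)) (hcompl : ∀ i, IsCompl (W₁ i) (W₂ i))
    (T₁ : ⨂[F] i, (W₁ i)) (T₂ : ⨂[F] i, (W₂ i)) :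
    tensorSliceRank F V
        (PiTensorProduct.map (fun i => (W₁ i).subtype) T₁ +
          PiTensorProduct.map (fun i => (W₂ i).subtype) T₂) =
      tensorSliceRank F (fun i => (W₁ i)) T₁ + tensorSliceRank F (fun i => (W₂ i)) T₂ := by
  classical
  have hd0 : 0 < d := by omega
  set T : ⨂[F] i, V i :=
    PiTensorProduct.map (fun i => (W₁ i).subtype) T₁ +
      PiTensorProduct.map (fun i => (W₂ i).subtype) T₂ with hTdef
  have hne1 : (sliceSet F (fun i => (W₁ i)) T₁).Nonempty := sliceSet_nonempty hd0 T₁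
  have hne2 : (sliceSet F (fun i => (W₂ i)) T₂).Nonempty := sliceSet_nonempty hd0 T₂
  have hneT : (sliceSet F V T).Nonempty := sliceSet_nonempty hd0 T
  refine le_antisymm ?_ ?_
  · -- subadditivity
    rw [tensorSliceRank_eq_sInf, tensorSliceRank_eq_sInf, tensorSliceRank_eq_sInf]
    exact Nat.sInf_le (add_mem_sliceSet (fun i => (W₁ i).subtype) (fun i => (W₂ i).subtype)
      (Nat.sInf_mem hne1) (Nat.sInf_mem hne2))
  · -- additivity lower bound
    rw [tensorSliceRank_eq_sInf, tensorSliceRank_eq_sInf, tensorSliceRank_eq_sInf]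
    obtain ⟨A, hAr, hA0⟩ := exists_subspaces T (Nat.sInf_mem hneT)
    set slot0 : Fin d := ⟨0, hd0⟩ with hslot0
    set slot1 : Fin d := ⟨1, by omega⟩ with hslot1
    have hslotne : slot1 ≠ slot0 := by
      simp [hslot0, hslot1, Fin.ext_iff]
    choose B C G G' hGs hGA hG'A hG's hdim hG0 hG'0 using
      exchange_key W₁ W₂ hcompl A slot0
    -- T₁ vanishing
    have hfacG : ∀ i, ∃ H : (V i ⧸ A i) →ₗ[F] (W₁ i ⧸ B i), H ∘ₗ (A i).mkQ = G i := by
      intro i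
      refine exists_factor ((A i).mkQ) (G i) ?_
      rw [Submodule.ker_mkQ]
      intro a ha
      exact LinearMap.mem_ker.2 (hGA i a ha)
    choose H hH using hfacG
    have hGT : PiTensorProduct.map G T = 0 := by
      have hGfun : G = fun i => (H i) ∘ₗ (A i).mkQ := funext fun i => (hH i).symm
      rw [hGfun, PiTensorProduct.map_comp, LinearMap.comp_apply, hA0, map_zero]
    have hexpandG : PiTensorProduct.map G T
        = PiTensorProduct.map (fun i => (B i).mkQ) T₁
          + PiTensorProduct.map (fun i => G i ∘ₗ (W₂ i).subtype) T₂ := by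
      rw [hTdef, map_add]
      congr 1
      · rw [← LinearMap.comp_apply, ← PiTensorProduct.map_comp,
          show (fun i => G i ∘ₗ (W₁ i).subtype) = (fun i => (B i).mkQ) from funext hGs]
      · rw [← LinearMap.comp_apply, ← PiTensorProduct.map_comp]
    have hBT₁ : PiTensorProduct.map (fun i => (B i).mkQ) T₁ = 0 := by
      have hz : PiTensorProduct.map (fun i => G i ∘ₗ (W₂ i).subtype) T₂ = 0 :=
        map_eq_zero_of_slot _ slot0 (hG0 slot0 rfl) T₂
      have := hGT
      rw [hexpandG, hz, add_zero] at this
      exact this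
    -- T₂ vanishing
    have hfacG' : ∀ i, ∃ H : (V i ⧸ A i) →ₗ[F] (W₂ i ⧸ C i), H ∘ₗ (A i).mkQ = G' i := by
      intro i
      refine exists_factor ((A i).mkQ) (G' i) ?_
      rw [Submodule.ker_mkQ]
      intro a ha
      exact LinearMap.mem_ker.2 (hG'A i a ha)
    choose H' hH' using hfacG'
    have hG'T : PiTensorProduct.map G' T = 0 := by
      have hGfun : G' = fun i => (H' i) ∘ₗ (A i).mkQ := funext fun i => (hH' i).symm
      rw [hGfun, PiTensorProduct.map_comp, LinearMap.comp_apply, hA0, map_zero]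
    have hexpandG' : PiTensorProduct.map G' T
        = PiTensorProduct.map (fun i => G' i ∘ₗ (W₁ i).subtype) T₁
          + PiTensorProduct.map (fun i => (C i).mkQ) T₂ := by
      rw [hTdef, map_add]
      congr 1
      · rw [← LinearMap.comp_apply, ← PiTensorProduct.map_comp]
      · rw [← LinearMap.comp_apply, ← PiTensorProduct.map_comp,
          show (fun i => G' i ∘ₗ (W₂ i).subtype) = (fun i => (C i).mkQ) from funext hG's]
    have hCT₂ : PiTensorProduct.map (fun i => (C i).mkQ) T₂ = 0 := by
      have hz : PiTensorProduct.map (fun i => G' i ∘ₗ (W₁ i).subtype) T₁ = 0 :=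
        map_eq_zero_of_slot _ slot1 (hG'0 slot1 hslotne) T₁
      have := hG'T
      rw [hexpandG', hz, zero_add] at this
      exact this
    -- wrap up
    have hm1 : (∑ i, Module.finrank F (B i)) ∈ sliceSet F (fun i => (W₁ i)) T₁ :=
      sum_finrank_mem_sliceSet B T₁ (mem_bigSpan_of_map_mkQ_eq_zero B T₁ hBT₁)
    have hm2 : (∑ i, Module.finrank F (C i)) ∈ sliceSet F (fun i => (W₂ i)) T₂ :=
      sum_finrank_mem_sliceSet C T₂ (mem_bigSpan_of_map_mkQ_eq_zero C T₂ hCT₂)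
    have hle1 : sInf (sliceSet F (fun i => (W₁ i)) T₁) ≤ ∑ i, Module.finrank F (B i) :=
      Nat.sInf_le hm1
    have hle2 : sInf (sliceSet F (fun i => (W₂ i)) T₂) ≤ ∑ i, Module.finrank F (C i) :=
      Nat.sInf_le hm2
    have hsum : (∑ i, Module.finrank F (B i)) + (∑ i, Module.finrank F (C i))
        = ∑ i, Module.finrank F (A i) := by
      rw [← Finset.sum_add_distrib]
      exact Finset.sum_congr rfl fun i _ => hdim i
    have : sInf (sliceSet F (fun i => (W₁ i)) T₁) + sInf (sliceSet F (fun i => (W₂ i)) T₂)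
        ≤ ∑ i, Module.finrank F (A i) := by
      omega
    exact this.trans hAr
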